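/- Let A ∈ ℝ^{m×n} with SVD A = Ũ Σ Ṽᵀ, r = min(m,n), let μ be a probability measure on ℝ^n with ∫‖x‖² dμ(x) < ∞, and let p₁,…,p_r > 0 with ∑_b p_b = 1. Define F(U,V) = ∫ ∑_{b=1}^r p_b ‖U_{:b}V_{:b}ᵀ x − A x‖² dμ(x) and G(U',V') = ∫ ∑_{b=1}^r p_b ‖(U'_{:b}(V'_{:b})ᵀ − Σ) Ṽᵀ x‖² dμ(x) for U, U' ∈ ℝ^{m×r} and V, V' ∈ ℝ^{n×r}. Then F(U,V) = G(ŨᵀU, ṼᵀV) for all (U,V); consequently inf_{U,V} F(U,V) = inf_{U',V'} G(U',V'), and (U,V) is a global minimizer of F if and only if (ŨᵀU, ṼᵀV) is a global minimizer of G. -/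
import Mathlib


open Matrix MeasureTheory

noncomputable section

/-- Squared Euclidean norm of a vector in `ℝ^m`. -/
def sqNorm {m : ℕ} (v : Fin m → ℝ) : ℝ := ∑ i, v i ^ 2

/-- `lrProd b U V = U_{:b} V_{:b}ᵀ`, the product of the submatrices consisting of the
first `b` columns of `U` and of `V`. -/
def lrProd {m n r : ℕ} (b : ℕ) (U : Matrix (Fin m) (Fin r) ℝ)
    (V : Matrix (Fin n) (Fin r) ℝ) : Matrix (Fin m) (Fin n) ℝ :=
  Matrix.of fun i j => ∑ t : Fin r, if (t : ℕ) < b then U i t * V j t else 0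

/-- `F(U,V) = ∫ ∑_{b=1}^r p_b ‖U_{:b}V_{:b}ᵀ x − A x‖² dμ(x)`.
(The index `b : Fin r` stands for the 1-indexed truncation level `b+1 ∈ {1,…,r}`.) -/
def maestroObj {m n r : ℕ} (A : Matrix (Fin m) (Fin n) ℝ)
    (μ : Measure (Fin n → ℝ)) (p : Fin r → ℝ)
    (U : Matrix (Fin m) (Fin r) ℝ) (V : Matrix (Fin n) (Fin r) ℝ) : ℝ :=
  ∫ x, ∑ b : Fin r,
    p b * sqNorm ((lrProd ((b : ℕ) + 1) U V).mulVec x - A.mulVec x) ∂μ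

/-- `G(U',V') = ∫ ∑_{b=1}^r p_b ‖(U'_{:b}(V'_{:b})ᵀ − Σ) Ṽᵀ x‖² dμ(x)`. -/
def transObj {m n r : ℕ} (S : Matrix (Fin m) (Fin n) ℝ)
    (Vt : Matrix (Fin n) (Fin n) ℝ) (μ : Measure (Fin n → ℝ)) (p : Fin r → ℝ)
    (U' : Matrix (Fin m) (Fin r) ℝ) (V' : Matrix (Fin n) (Fin r) ℝ) : ℝ :=
  ∫ x, ∑ b : Fin r,
    p b * sqNorm ((lrProd ((b : ℕ) + 1) U' V' - S).mulVec (Vtᵀ.mulVec x)) ∂μ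

/-- With `A = Ũ Σ Ṽᵀ` an SVD, `r = min m n`, `μ` a probability measure with
finite second moment, and positive weights summing to one:
`F(U,V) = G(ŨᵀU, ṼᵀV)` for all `(U,V)`; hence `inf F = inf G`; and `(U,V)` is a
global minimizer of `F` iff `(ŨᵀU, ṼᵀV)` is a global minimizer of `G`. -/

lemma sqNorm_eq_dot {m : ℕ} (v : Fin m → ℝ) : sqNorm v = v ⬝ᵥ v := by
  simp [sqNorm, dotProduct, sq]

lemma sqNorm_orth {m : ℕ} {Ut : Matrix (Fin m) (Fin m) ℝ} (h : Ut * Utᵀ = 1)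
    (y : Fin m → ℝ) : sqNorm (Utᵀ.mulVec y) = sqNorm y := by
  rw [sqNorm_eq_dot, sqNorm_eq_dot]
  calc Utᵀ.mulVec y ⬝ᵥ Utᵀ.mulVec y
      = (y ᵥ* Ut) ⬝ᵥ Utᵀ.mulVec y := by rw [Matrix.mulVec_transpose]
    _ = (y ᵥ* Ut ᵥ* Utᵀ) ⬝ᵥ y := by rw [Matrix.dotProduct_mulVec]
    _ = (y ᵥ* (Ut * Utᵀ)) ⬝ᵥ y := by rw [Matrix.vecMul_vecMul]
    _ = y ⬝ᵥ y := by rw [h, Matrix.vecMul_one]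

lemma lrProd_eq_diag {m n r : ℕ} (b : ℕ) (U : Matrix (Fin m) (Fin r) ℝ)
    (V : Matrix (Fin n) (Fin r) ℝ) :
    lrProd b U V = U * Matrix.diagonal (fun t : Fin r => if (t : ℕ) < b then (1:ℝ) else 0) * Vᵀ := by
  ext i j
  simp only [lrProd, Matrix.of_apply, Matrix.mul_apply, Matrix.diagonal, Matrix.transpose_apply,
    Matrix.of_apply]
  refine Finset.sum_congr rfl fun t _ => ?_
  simp only [mul_ite, mul_one, mul_zero, Finset.sum_ite_eq', Finset.mem_univ, if_true]
  split <;> simp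

lemma lrProd_mul {m n r m' n' : ℕ} (b : ℕ) (X : Matrix (Fin m') (Fin m) ℝ)
    (Y : Matrix (Fin n') (Fin n) ℝ) (U : Matrix (Fin m) (Fin r) ℝ)
    (V : Matrix (Fin n) (Fin r) ℝ) :
    lrProd b (X * U) (Y * V) = X * lrProd b U V * Yᵀ := by
  rw [lrProd_eq_diag, lrProd_eq_diag, Matrix.transpose_mul]
  simp only [Matrix.mul_assoc]

theorem stmt1 {m n : ℕ} (A : Matrix (Fin m) (Fin n) ℝ)
    (Ut : Matrix (Fin m) (Fin m) ℝ) (S : Matrix (Fin m) (Fin n) ℝ)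
    (Vt : Matrix (Fin n) (Fin n) ℝ)
    (hUorth : Utᵀ * Ut = 1) (hUorth' : Ut * Utᵀ = 1)
    (hVorth : Vtᵀ * Vt = 1) (hVorth' : Vt * Vtᵀ = 1)
    (hSdiag : ∀ (i : Fin m) (j : Fin n), (i : ℕ) ≠ (j : ℕ) → S i j = 0)
    (hSnonneg : ∀ (i : Fin m) (j : Fin n), (i : ℕ) = (j : ℕ) → 0 ≤ S i j)
    (hSmono : ∀ (i i' : Fin m) (j j' : Fin n), (i : ℕ) = (j : ℕ) → (i' : ℕ) = (j' : ℕ) →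
      (i : ℕ) ≤ (i' : ℕ) → S i' j' ≤ S i j)
    (hA : A = Ut * S * Vtᵀ)
    (μ : Measure (Fin n → ℝ)) [IsProbabilityMeasure μ]
    (hmoment : Integrable (fun x => ∑ i, x i ^ 2) μ)
    (p : Fin (min m n) → ℝ) (hp : ∀ b, 0 < p b) (hpsum : ∑ b, p b = 1) :
    (∀ (U : Matrix (Fin m) (Fin (min m n)) ℝ) (V : Matrix (Fin n) (Fin (min m n)) ℝ),
      maestroObj A μ p U V = transObj S Vt μ p (Utᵀ * U) (Vtᵀ * V)) ∧
    ((⨅ UV : Matrix (Fin m) (Fin (min m n)) ℝ × Matrix (Fin n) (Fin (min m n)) ℝ,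
        maestroObj A μ p UV.1 UV.2) =
      ⨅ UV : Matrix (Fin m) (Fin (min m n)) ℝ × Matrix (Fin n) (Fin (min m n)) ℝ,
        transObj S Vt μ p UV.1 UV.2) ∧
    (∀ (U : Matrix (Fin m) (Fin (min m n)) ℝ) (V : Matrix (Fin n) (Fin (min m n)) ℝ),
      (∀ (U' : Matrix (Fin m) (Fin (min m n)) ℝ) (V' : Matrix (Fin n) (Fin (min m n)) ℝ),
          maestroObj A μ p U V ≤ maestroObj A μ p U' V') ↔
      (∀ (U' : Matrix (Fin m) (Fin (min m n)) ℝ) (V' : Matrix (Fin n) (Fin (min m n)) ℝ),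
          transObj S Vt μ p (Utᵀ * U) (Vtᵀ * V) ≤ transObj S Vt μ p U' V')) := by
  have key : ∀ (U : Matrix (Fin m) (Fin (min m n)) ℝ) (V : Matrix (Fin n) (Fin (min m n)) ℝ),
      maestroObj A μ p U V = transObj S Vt μ p (Utᵀ * U) (Vtᵀ * V) := by
    intro U V
    unfold maestroObj transObj
    refine integral_congr_ae (Filter.Eventually.of_forall fun x => ?_)
    refine Finset.sum_congr rfl fun b _ => ?_
    congr 1
    have hM : (lrProd ((b : ℕ) + 1) (Utᵀ * U) (Vtᵀ * V) - S) * Vtᵀ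
        = Utᵀ * (lrProd ((b : ℕ) + 1) U V - A) := by
      rw [lrProd_mul]
      rw [Matrix.sub_mul, Matrix.mul_sub, hA]
      congr 1
      · rw [Matrix.transpose_transpose, Matrix.mul_assoc, Matrix.mul_assoc, hVorth',
          Matrix.mul_one]
      · rw [← Matrix.mul_assoc, ← Matrix.mul_assoc, hUorth, Matrix.one_mul]
    have hv : (lrProd ((b : ℕ) + 1) (Utᵀ * U) (Vtᵀ * V) - S).mulVec (Vtᵀ.mulVec x)
        = Utᵀ.mulVec ((lrProd ((b : ℕ) + 1) U V - A).mulVec x) := by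
      rw [Matrix.mulVec_mulVec, hM, ← Matrix.mulVec_mulVec]
    rw [← Matrix.sub_mulVec, hv, sqNorm_orth hUorth']
  refine ⟨key, ?_, ?_⟩
  · have hrange : Set.range
        (fun UV : Matrix (Fin m) (Fin (min m n)) ℝ × Matrix (Fin n) (Fin (min m n)) ℝ =>
          maestroObj A μ p UV.1 UV.2)
        = Set.range (fun UV : Matrix (Fin m) (Fin (min m n)) ℝ ×
            Matrix (Fin n) (Fin (min m n)) ℝ => transObj S Vt μ p UV.1 UV.2) := by
      ext c
      constructor
      · rintro ⟨⟨U, V⟩, rfl⟩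
        exact ⟨(Utᵀ * U, Vtᵀ * V), (key U V).symm⟩
      · rintro ⟨⟨U', V'⟩, rfl⟩
        refine ⟨(Ut * U', Vt * V'), ?_⟩
        show maestroObj A μ p (Ut * U') (Vt * V') = transObj S Vt μ p U' V'
        rw [key, ← Matrix.mul_assoc, ← Matrix.mul_assoc, hUorth, hVorth, Matrix.one_mul,
          Matrix.one_mul]
    simp only [iInf, hrange]
  · intro U V
    constructor
    · intro h U' V'
      have h2 := h (Ut * U') (Vt * V')
      rw [key, key, ← Matrix.mul_assoc, ← Matrix.mul_assoc, hUorth, hVorth, Matrix.one_mul,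
        Matrix.one_mul] at h2
      exact h2
    · intro h U' V'
      rw [key U V, key U' V']
      exact h _ _


end
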